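/- Let X be a quasi κ-metrizable space and Y a regularly closed subspace of X. Then Y is quasi κ-metrizable. -/

import Mathlib

/-- A set is regularly closed if it equals the closure of its interior. -/
def RegClosed {X : Type*} [TopologicalSpace X] (C : Set X) : Prop :=
  C = closure (interior C)

/-- A set is regularly open if it equals the interior of its closure. -/
def RegOpen {X : Type*} [TopologicalSpace X] (U : Set X) : Prop :=
  U = interior (closure U)

/-- A quasi κ-metric on `X`: a nonnegative function of a point and a regularly
closed set satisfying axioms K1*, K2, K3 and K4. -/
structure IsQuasiKappaMetric {X : Type*} [TopologicalSpace X] (ρ : X → Set X → ℝ) : Prop where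
  nonneg : ∀ x C, RegClosed C → 0 ≤ ρ x C
  k1star : ∀ C : Set X, RegClosed C → ∃ V : Set X, IsOpen V ∧ V ⊆ Cᶜ ∧
    Cᶜ ⊆ closure V ∧ ∀ x, 0 < ρ x C ↔ x ∈ V
  k2 : ∀ x (C C' : Set X), RegClosed C → RegClosed C' → C ⊆ C' → ρ x C' ≤ ρ x C
  k3 : ∀ C : Set X, RegClosed C → Continuous (fun x => ρ x C)
  k4 : ∀ S : Set (Set X), S.Nonempty → (∀ C ∈ S, RegClosed C) → IsChain (· ⊆ ·) S →
    ∀ x, ρ x (closure (⋃₀ S)) = sInf {r : ℝ | ∃ C ∈ S, r = ρ x C}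

/-- If `Y` is regularly closed and `y ∈ Y`, then every open neighbourhood `U` of `y`
satisfies `y ∈ closure (U ∩ interior Y)`. -/
lemma regClosed_mem_closure_inter_interior {X : Type*} [TopologicalSpace X] {Y : Set X}
    (hY : RegClosed Y) {y : X} {U : Set X} (hy : y ∈ Y) (hU : IsOpen U) (hyU : y ∈ U) :
    y ∈ closure (U ∩ interior Y) := by
  rw [mem_closure_iff]
  intro O hO hyO
  have h1 : y ∈ closure (interior Y) := hY ▸ hy
  rw [mem_closure_iff] at h1
  obtain ⟨z, hz⟩ := h1 (O ∩ U) (hO.inter hU) ⟨hyO, hyU⟩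
  exact ⟨z, hz.1.1, hz.1.2, hz.2⟩

/-- A regularly closed subset of a regularly closed subspace is regularly closed in the
ambient space. -/
lemma regClosed_image {X : Type*} [TopologicalSpace X] {Y : Set X} (hY : RegClosed Y)
    {C : Set Y} (hC : RegClosed C) : RegClosed (Subtype.val '' C) := by
  have hYcl : IsClosed Y := by rw [hY]; exact isClosed_closure
  have hemb := hYcl.isClosedEmbedding_subtypeVal
  have key : Subtype.val '' C = closure (Subtype.val '' interior C) := by
    conv_lhs => rw [hC]
    exact (hemb.closure_image_eq _).symm
  have hDcl : IsClosed (Subtype.val '' C) := by rw [key]; exact isClosed_closure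
  refine subset_antisymm ?_ (closure_minimal interior_subset hDcl)
  conv_lhs => rw [key]
  have hsub : Subtype.val '' interior C ⊆ closure (interior (Subtype.val '' C)) := by
    rintro _ ⟨y, hyA, rfl⟩
    obtain ⟨U, hUopen, hUeq⟩ := isOpen_induced_iff.mp (isOpen_interior (s := C))
    have hyU : (y : X) ∈ U := by rw [← hUeq] at hyA; exact hyA
    have hsub2 : U ∩ interior Y ⊆ Subtype.val '' C := by
      rintro z ⟨hzU, hzY⟩
      refine ⟨⟨z, interior_subset hzY⟩, ?_, rfl⟩
      have : (⟨z, interior_subset hzY⟩ : Y) ∈ Subtype.val ⁻¹' U := hzU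
      rw [hUeq] at this
      exact interior_subset this
    have hsub3 : U ∩ interior Y ⊆ interior (Subtype.val '' C) :=
      interior_maximal hsub2 (hUopen.inter isOpen_interior)
    exact closure_mono hsub3 (regClosed_mem_closure_inter_interior hY y.2 hUopen hyU)
  calc closure (Subtype.val '' interior C)
      ⊆ closure (closure (interior (Subtype.val '' C))) := closure_mono hsub
    _ = closure (interior (Subtype.val '' C)) := closure_closure

theorem stmt7 {X : Type*} [TopologicalSpace X] (Y : Set X) (hY : RegClosed Y)
    (hX : ∃ ρ : X → Set X → ℝ, IsQuasiKappaMetric ρ) :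
    ∃ d : Y → Set Y → ℝ, IsQuasiKappaMetric d := by
  obtain ⟨ρ, hρ⟩ := hX
  have hYcl : IsClosed Y := by rw [hY]; exact isClosed_closure
  have hemb := hYcl.isClosedEmbedding_subtypeVal
  refine ⟨fun y C => ρ ↑y (Subtype.val '' C), ?_⟩
  constructor
  · intro x C hC
    exact hρ.nonneg _ _ (regClosed_image hY hC)
  · intro C hC
    have hD : RegClosed (Subtype.val '' C) := regClosed_image hY hC
    have hDcl : IsClosed (Subtype.val '' C) := by rw [hD]; exact isClosed_closure
    obtain ⟨V, hVopen, hVsub, hVdense, hVpos⟩ := hρ.k1star _ hD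
    refine ⟨Subtype.val ⁻¹' V, hVopen.preimage continuous_subtype_val, ?_, ?_, fun y => hVpos ↑y⟩
    · intro y hyV hyC
      exact hVsub hyV ⟨y, hyC, rfl⟩
    · intro y hyC
      have hyD : (y : X) ∉ Subtype.val '' C := by
        rintro ⟨c, hc, hcy⟩
        exact hyC (by rwa [Subtype.val_injective hcy] at hc)
      rw [mem_closure_iff]
      intro O hO hyO
      obtain ⟨U, hUopen, hUeq⟩ := isOpen_induced_iff.mp hO
      have hyU : (y : X) ∈ U := by rw [← hUeq] at hyO; exact hyO
      -- W := (U ∩ (val '' C)ᶜ) ∩ interior Y is a nonempty open set contained in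
      -- the complement of val '' C, hence meets V.
      set W : Set X := (U ∩ (Subtype.val '' C)ᶜ) ∩ interior Y with hWdef
      have hWopen : IsOpen W := ((hUopen.inter hDcl.isOpen_compl).inter isOpen_interior)
      have hyW : (y : X) ∈ closure W :=
        regClosed_mem_closure_inter_interior hY y.2 (hUopen.inter hDcl.isOpen_compl) ⟨hyU, hyD⟩
      have hWne : W.Nonempty := by
        by_contra h
        rw [Set.not_nonempty_iff_eq_empty] at h
        rw [h, closure_empty] at hyW
        exact hyW
      obtain ⟨z, hz⟩ := hWne
      have hzV : z ∈ closure V := hVdense hz.1.2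
      rw [mem_closure_iff] at hzV
      obtain ⟨w, hwW, hwV⟩ := hzV W hWopen hz
      refine ⟨⟨w, interior_subset hwW.2⟩, ?_, hwV⟩
      rw [← hUeq]
      exact hwW.1.1
  · intro x C C' hC hC' hsub
    exact hρ.k2 _ _ _ (regClosed_image hY hC) (regClosed_image hY hC')
      (Set.image_mono hsub)
  · intro C hC
    exact (hρ.k3 _ (regClosed_image hY hC)).comp continuous_subtype_val
  · intro S hS hSreg hSchain x
    have himg : Subtype.val '' closure (⋃₀ S)
        = closure (⋃₀ (Set.image Subtype.val '' S)) := by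
      rw [← Set.image_sUnion, hemb.closure_image_eq]
    rw [himg, hρ.k4 (Set.image Subtype.val '' S) (hS.image _)
      (by rintro _ ⟨C, hC, rfl⟩; exact regClosed_image hY (hSreg C hC))
      (hSchain.image_of_map_rel _ _ _ fun _ _ h => Set.image_mono h)]
    congr 1
    ext r
    constructor
    · rintro ⟨_, ⟨C, hC, rfl⟩, rfl⟩
      exact ⟨C, hC, rfl⟩
    · rintro ⟨C, hC, rfl⟩
      exact ⟨_, ⟨C, hC, rfl⟩, rfl⟩
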